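/- Let c₁, c₂, c₃ ∈ [−1,1] be such that λ_{mn} = (1/4)·(1 + (−1)^m c₁ − (−1)^{m+n} c₂ + (−1)^n c₃) ≥ 0 for all m,n ∈ {0,1} (i.e. the Bell-diagonal state (1/4)(I₄ + Σᵢ cᵢ σᵢ⊗σᵢ) is a valid density matrix). Then the partial transpose of the nonlocal-cloning output ρ̃ = (1/4)·(I₄ + (3/5)·Σᵢ cᵢ σᵢ⊗σᵢ) fails to be positive semidefinite (equivalently, ρ̃ is entangled) if and only if |c₁| + |c₂| + |c₃| > 5/3. This characterizes the (larger) conic broadcastable regions of Bell-diagonal states under nonlocal cloning. -/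

import Mathlib

set_option maxHeartbeats 1000000


open Matrix Kronecker
open scoped ComplexOrder

/-- The three Pauli matrices. -/
noncomputable def pauli : Fin 3 → Matrix (Fin 2) (Fin 2) ℂ :=
  ![!![0, 1; 1, 0], !![0, -Complex.I; Complex.I, 0], !![1, 0; 0, -1]]

/-- Partial transpose on the second qubit:
`(ρ^{T₂})_{(i,μ),(j,ν)} = ρ_{(i,ν),(j,μ)}`. -/
noncomputable def ptranspose (ρ : Matrix (Fin 2 × Fin 2) (Fin 2 × Fin 2) ℂ) :
    Matrix (Fin 2 × Fin 2) (Fin 2 × Fin 2) ℂ :=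
  Matrix.of fun p q => ρ (p.1, q.2) (q.1, p.2)


private lemma quad_form (c₁ c₂ c₃ : ℝ) (x : Fin 2 × Fin 2 → ℂ) :
    star x ⬝ᵥ (ptranspose ((1/4 : ℂ) • ((1 : Matrix (Fin 2 × Fin 2) (Fin 2 × Fin 2) ℂ)
        + (3/5 : ℂ) • ((c₁ : ℂ) • (pauli 0 ⊗ₖ pauli 0) + (c₂ : ℂ) • (pauli 1 ⊗ₖ pauli 1)
            + (c₃ : ℂ) • (pauli 2 ⊗ₖ pauli 2))))) *ᵥ x
    = (1/8 : ℂ) *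
      ( ((1 + 3/5*(c₁+c₂+c₃) : ℝ) : ℂ) * Complex.normSq (x (0,0) + x (1,1))
      + ((1 - 3/5*(c₁+c₂-c₃) : ℝ) : ℂ) * Complex.normSq (x (0,0) - x (1,1))
      + ((1 + 3/5*(c₁-c₂-c₃) : ℝ) : ℂ) * Complex.normSq (x (0,1) + x (1,0))
      + ((1 - 3/5*(c₁-c₂+c₃) : ℝ) : ℂ) * Complex.normSq (x (0,1) - x (1,0))) := by
  simp only [dotProduct, mulVec, Fintype.sum_prod_type, Fin.sum_univ_two, ptranspose, pauli,
    Matrix.of_apply, kroneckerMap_apply, Matrix.smul_apply, Matrix.add_apply, Matrix.one_apply,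
    Pi.star_apply, Matrix.cons_val', Matrix.cons_val_zero, Matrix.cons_val_one, Matrix.head_cons,
    Matrix.head_fin_const, Matrix.empty_val', Matrix.cons_val_fin_one, Matrix.cons_val_two,
    Matrix.tail_cons, Prod.mk.injEq, smul_eq_mul, Complex.I_sq, mul_one, mul_zero, zero_mul,
    mul_neg, neg_neg, add_zero, zero_add, one_mul, Fin.isValue, and_self, and_false, false_and,
    and_true, true_and, if_true, if_false, reduceCtorEq, ite_false, ite_true, one_ne_zero,
    zero_ne_one, reduceIte]
  simp only [← Complex.mul_conj, map_add, map_sub, Complex.star_def]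
  push_cast
  ring_nf
  simp only [Complex.I_sq]
  ring

private lemma herm_M (c₁ c₂ c₃ : ℝ) :
    (ptranspose ((1/4 : ℂ) • ((1 : Matrix (Fin 2 × Fin 2) (Fin 2 × Fin 2) ℂ)
        + (3/5 : ℂ) • ((c₁ : ℂ) • (pauli 0 ⊗ₖ pauli 0) + (c₂ : ℂ) • (pauli 1 ⊗ₖ pauli 1)
            + (c₃ : ℂ) • (pauli 2 ⊗ₖ pauli 2))))).IsHermitian := by
  ext p q
  obtain ⟨i, μ⟩ := p
  obtain ⟨j, ν⟩ := q
  fin_cases i <;> fin_cases μ <;> fin_cases j <;> fin_cases ν <;>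
    simp [ptranspose, pauli, Matrix.conjTranspose_apply, Matrix.one_apply, Complex.ext_iff]

noncomputable def vv (a b c d : ℂ) : Fin 2 × Fin 2 → ℂ := fun p => !![a, b; c, d] p.1 p.2

/-- Broadcastable region of Bell-diagonal states under nonlocal cloning.  If
the Bell-diagonal state with parameters `c₁, c₂, c₃ ∈ [−1,1]` is a valid density matrix
(all eigenvalues `λ_{mn} ≥ 0`), then the clone output `ρ̃₁₂ = {0, 0, (3/5)T^b}` of the
Buzek–Hillery nonlocal optimal cloner has non-positive-semidefinite partial transpose
(i.e. is entangled) iff `|c₁| + |c₂| + |c₃| > 5/3`. -/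
theorem belldiagonal_broadcasting_range_nonlocal (c₁ c₂ c₃ : ℝ)
    (hc1 : c₁ ∈ Set.Icc (-1 : ℝ) 1) (hc2 : c₂ ∈ Set.Icc (-1 : ℝ) 1)
    (hc3 : c₃ ∈ Set.Icc (-1 : ℝ) 1)
    (hEig : ∀ m n : Fin 2, 0 ≤ (1/4 : ℝ) * (1 + (-1)^(m : ℕ) * c₁
        - (-1)^((m : ℕ) + (n : ℕ)) * c₂ + (-1)^(n : ℕ) * c₃)) :
    ¬ (ptranspose ((1/4 : ℂ) • ((1 : Matrix (Fin 2 × Fin 2) (Fin 2 × Fin 2) ℂ)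
        + (3/5 : ℂ) • ((c₁ : ℂ) • (pauli 0 ⊗ₖ pauli 0) + (c₂ : ℂ) • (pauli 1 ⊗ₖ pauli 1)
            + (c₃ : ℂ) • (pauli 2 ⊗ₖ pauli 2))))).PosSemidef
    ↔ 5/3 < |c₁| + |c₂| + |c₃| := by
  have h00 := hEig 0 0
  have h01 := hEig 0 1
  have h10 := hEig 1 0
  have h11 := hEig 1 1
  norm_num at h00 h01 h10 h11
  constructor
  · intro hn
    by_contra hle
    push_neg at hle
    refine hn (Matrix.posSemidef_iff_dotProduct_mulVec.mpr ⟨herm_M c₁ c₂ c₃, fun x => ?_⟩)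
    rw [quad_form]
    have hA : (0:ℝ) ≤ 1 + 3/5*(c₁+c₂+c₃) := by
      linarith [neg_abs_le c₁, neg_abs_le c₂, neg_abs_le c₃]
    have hB : (0:ℝ) ≤ 1 - 3/5*(c₁+c₂-c₃) := by
      linarith [le_abs_self c₁, le_abs_self c₂, neg_abs_le c₃]
    have hC : (0:ℝ) ≤ 1 + 3/5*(c₁-c₂-c₃) := by
      linarith [neg_abs_le c₁, le_abs_self c₂, le_abs_self c₃]
    have hD : (0:ℝ) ≤ 1 - 3/5*(c₁-c₂+c₃) := by
      linarith [le_abs_self c₁, neg_abs_le c₂, le_abs_self c₃]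
    have hcast : (1/8 : ℂ) *
      ( ((1 + 3/5*(c₁+c₂+c₃) : ℝ) : ℂ) * Complex.normSq (x (0,0) + x (1,1))
      + ((1 - 3/5*(c₁+c₂-c₃) : ℝ) : ℂ) * Complex.normSq (x (0,0) - x (1,1))
      + ((1 + 3/5*(c₁-c₂-c₃) : ℝ) : ℂ) * Complex.normSq (x (0,1) + x (1,0))
      + ((1 - 3/5*(c₁-c₂+c₃) : ℝ) : ℂ) * Complex.normSq (x (0,1) - x (1,0)))
      = (((1/8 : ℝ) *
      ( (1 + 3/5*(c₁+c₂+c₃)) * Complex.normSq (x (0,0) + x (1,1))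
      + (1 - 3/5*(c₁+c₂-c₃)) * Complex.normSq (x (0,0) - x (1,1))
      + (1 + 3/5*(c₁-c₂-c₃)) * Complex.normSq (x (0,1) + x (1,0))
      + (1 - 3/5*(c₁-c₂+c₃)) * Complex.normSq (x (0,1) - x (1,0))) : ℝ) : ℂ) := by
      push_cast; ring
    rw [hcast, Complex.zero_le_real]
    have n1 := Complex.normSq_nonneg (x (0,0) + x (1,1))
    have n2 := Complex.normSq_nonneg (x (0,0) - x (1,1))
    have n3 := Complex.normSq_nonneg (x (0,1) + x (1,0))
    have n4 := Complex.normSq_nonneg (x (0,1) - x (1,0))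
    positivity
  · intro hgt hPSD
    have q1 := hPSD.dotProduct_mulVec_nonneg (vv 1 0 0 1)
    have q2 := hPSD.dotProduct_mulVec_nonneg (vv 1 0 0 (-1))
    have q3 := hPSD.dotProduct_mulVec_nonneg (vv 0 1 1 0)
    have q4 := hPSD.dotProduct_mulVec_nonneg (vv 0 1 (-1) 0)
    rw [quad_form] at q1 q2 q3 q4
    simp only [vv, Matrix.cons_val', Matrix.cons_val_zero, Matrix.cons_val_one, Matrix.head_cons,
      Matrix.empty_val', Matrix.cons_val_fin_one, Matrix.head_fin_const] at q1 q2 q3 q4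
    norm_num [Complex.normSq] at q1 q2 q3 q4
    have r1 : (0:ℝ) ≤ 1 / 8 * ((1 + 3 / 5 * (c₁ + c₂ + c₃)) * 4) := by
      rw [show (1/8 * ((1 + 3/5*((c₁:ℂ)+(c₂:ℂ)+(c₃:ℂ)))*4) : ℂ)
          = (((1/8*((1+3/5*(c₁+c₂+c₃))*4)) : ℝ) : ℂ) by push_cast; ring] at q1
      exact Complex.zero_le_real.mp q1
    have r2 : (0:ℝ) ≤ 1 / 8 * ((1 - 3 / 5 * (c₁ + c₂ - c₃)) * 4) := by
      rw [show (1/8 * ((1 - 3/5*((c₁:ℂ)+(c₂:ℂ)-(c₃:ℂ)))*4) : ℂ)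
          = (((1/8*((1-3/5*(c₁+c₂-c₃))*4)) : ℝ) : ℂ) by push_cast; ring] at q2
      exact Complex.zero_le_real.mp q2
    have r3 : (0:ℝ) ≤ 1 / 8 * ((1 + 3 / 5 * (c₁ - c₂ - c₃)) * 4) := by
      rw [show (1/8 * ((1 + 3/5*((c₁:ℂ)-(c₂:ℂ)-(c₃:ℂ)))*4) : ℂ)
          = (((1/8*((1+3/5*(c₁-c₂-c₃))*4)) : ℝ) : ℂ) by push_cast; ring] at q3
      exact Complex.zero_le_real.mp q3
    have r4 : (0:ℝ) ≤ 1 / 8 * ((1 - 3 / 5 * (c₁ - c₂ + c₃)) * 4) := by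
      rw [show (1/8 * ((1 - 3/5*((c₁:ℂ)-(c₂:ℂ)+(c₃:ℂ)))*4) : ℂ)
          = (((1/8*((1-3/5*(c₁-c₂+c₃))*4)) : ℝ) : ℂ) by push_cast; ring] at q4
      exact Complex.zero_le_real.mp q4
    rcases abs_cases c₁ with ⟨e1, _⟩ | ⟨e1, _⟩ <;>
      rcases abs_cases c₂ with ⟨e2, _⟩ | ⟨e2, _⟩ <;>
      rcases abs_cases c₃ with ⟨e3, _⟩ | ⟨e3, _⟩ <;>
      linarith
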